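/- Let T : E → E be γ-Lipschitz with γ > 0, let x₀ ∈ E, let λ ∈ (0,1), and let the sequence (x_k) be defined by x_{k+1} = λ·x₀ + (1-λ)·T(x_k). Then for every k ≥ 1, ‖T(x_k) - x_k‖ ≤ (1-λ)^k·γ^k·‖T(x₀) - x₀‖ + (λ/(1-λ))·‖x₀ - x_k‖. -/

import Mathlib

/-- Fixed-step Halpern iteration: fixed-point error bound.
For a γ-Lipschitz operator `T` (γ > 0) and the iteration
`x_{k+1} = λ • x₀ + (1-λ) • T (x_k)` with λ ∈ (0,1), for all `k ≥ 1`,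
`‖T x_k - x_k‖ ≤ (1-λ)^k γ^k ‖T x₀ - x₀‖ + (λ/(1-λ)) ‖x₀ - x_k‖`. -/
theorem fixed_step_halpern_fixed_point_error_bound
    {E : Type*} [NormedAddCommGroup E] [NormedSpace ℝ E]
    (T : E → E) (γ : ℝ) (hγ : 0 < γ)
    (hT : ∀ x y : E, ‖T x - T y‖ ≤ γ * ‖x - y‖)
    (x₀ : E) (l : ℝ) (hl0 : 0 < l) (hl1 : l < 1)
    (x : ℕ → E) (hx0 : x 0 = x₀)
    (hx : ∀ k : ℕ, x (k + 1) = l • x₀ + (1 - l) • T (x k)) :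
    ∀ k : ℕ, 1 ≤ k →
      ‖T (x k) - x k‖ ≤
        (1 - l) ^ k * γ ^ k * ‖T x₀ - x₀‖ + (l / (1 - l)) * ‖x₀ - x k‖ := by
  have h1l : (0:ℝ) < 1 - l := by linarith
  -- consecutive difference bound
  have key : ∀ k : ℕ, ‖x (k+1) - x k‖ ≤ (1-l)^k * γ^k * ((1-l) * ‖T x₀ - x₀‖) := by
    intro k
    induction k with
    | zero =>
      have hd : x 1 - x 0 = (1-l) • (T x₀ - x₀) := by
        rw [hx 0, hx0]; module
      rw [hd, norm_smul, Real.norm_eq_abs, abs_of_pos h1l]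
      simp
    | succ k ih =>
      have hd : x (k+2) - x (k+1) = (1-l) • (T (x (k+1)) - T (x k)) := by
        rw [hx (k+1), hx k]; module
      rw [hd, norm_smul, Real.norm_eq_abs, abs_of_pos h1l]
      have h2 := hT (x (k+1)) (x k)
      have hγk : (0:ℝ) ≤ (1-l)^k * γ^k := by positivity
      calc (1-l) * ‖T (x (k+1)) - T (x k)‖ ≤ (1-l) * (γ * ‖x (k+1) - x k‖) := by
            exact mul_le_mul_of_nonneg_left h2 h1l.le
        _ ≤ (1-l) * (γ * ((1-l)^k * γ^k * ((1-l) * ‖T x₀ - x₀‖))) := by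
            have := mul_le_mul_of_nonneg_left ih hγ.le
            exact mul_le_mul_of_nonneg_left this h1l.le
        _ = (1-l)^(k+1) * γ^(k+1) * ((1-l) * ‖T x₀ - x₀‖) := by ring
  intro k _
  have hdec : (1-l) • (T (x k) - x k) = (x (k+1) - x k) + l • (x k - x₀) := by
    rw [hx k]; module
  have hsm : T (x k) - x k = ((1-l)⁻¹) • ((x (k+1) - x k) + l • (x k - x₀)) := by
    rw [← hdec, smul_smul, inv_mul_cancel₀ h1l.ne', one_smul]
  rw [hsm, norm_smul, Real.norm_eq_abs, abs_of_pos (inv_pos.mpr h1l)]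
  have htri : ‖(x (k+1) - x k) + l • (x k - x₀)‖ ≤ ‖x (k+1) - x k‖ + l * ‖x k - x₀‖ := by
    calc ‖(x (k+1) - x k) + l • (x k - x₀)‖ ≤ ‖x (k+1) - x k‖ + ‖l • (x k - x₀)‖ :=
          norm_add_le _ _
      _ = ‖x (k+1) - x k‖ + l * ‖x k - x₀‖ := by
          rw [norm_smul, Real.norm_eq_abs, abs_of_pos hl0]
  have hnorm : ‖x k - x₀‖ = ‖x₀ - x k‖ := norm_sub_rev _ _
  have hk := key k
  calc (1-l)⁻¹ * ‖(x (k+1) - x k) + l • (x k - x₀)‖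
      ≤ (1-l)⁻¹ * (‖x (k+1) - x k‖ + l * ‖x k - x₀‖) := by
        exact mul_le_mul_of_nonneg_left htri (inv_pos.mpr h1l).le
    _ ≤ (1-l)⁻¹ * ((1-l)^k * γ^k * ((1-l) * ‖T x₀ - x₀‖) + l * ‖x k - x₀‖) := by
        have : ‖x (k+1) - x k‖ + l * ‖x k - x₀‖ ≤
            (1-l)^k * γ^k * ((1-l) * ‖T x₀ - x₀‖) + l * ‖x k - x₀‖ := by linarith
        exact mul_le_mul_of_nonneg_left this (inv_pos.mpr h1l).le
    _ = (1-l)^k * γ^k * ‖T x₀ - x₀‖ + (l / (1-l)) * ‖x₀ - x k‖ := by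
        rw [← hnorm]; field_simp
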